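/- arXiv:1810.10935 — 2 statements merged into one kernel-verified Lean document; each statement's English description precedes it below -/
import Mathlib

section
/- For every real number z > 1, the function x ↦ ∑_{n=1}^∞ cos(n x)/n^z is strictly decreasing on the interval [0, π]. -/
open Real Complex MeasureTheory Set NNReal ENNReal

lemma geom_cos_hasSum {r : ℝ} (hr0 : 0 ≤ r) (hr1 : r < 1) (w : ℝ) :
    HasSum (fun n : ℕ => r ^ (n + 1) * Real.cos (((n : ℝ) + 1) * w))
      ((r * Real.cos w - r ^ 2) / (1 - 2 * r * Real.cos w + r ^ 2)) := by
  set q : ℂ := (r : ℂ) * Complex.exp (w * I) with hq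
  have hnq : ‖q‖ < 1 := by
    rw [hq, norm_mul, Complex.norm_exp_ofReal_mul_I, mul_one, Complex.norm_real,
      Real.norm_of_nonneg hr0]
    exact hr1
  have h1 : HasSum (fun n : ℕ => q ^ (n + 1)) (q * (1 - q)⁻¹) := by
    simpa [pow_succ'] using (hasSum_geometric_of_norm_lt_one hnq).mul_left q
  have h2 : HasSum (fun n : ℕ => (q ^ (n + 1)).re) ((q * (1 - q)⁻¹).re) := by
    simpa using h1.mapL Complex.reCLM
  have hterm : ∀ n : ℕ, (q ^ (n + 1)).re = r ^ (n + 1) * Real.cos (((n : ℝ) + 1) * w) := by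
    intro n
    have h3 : q ^ (n + 1) = ((r ^ (n + 1) : ℝ) : ℂ) * Complex.exp ((((n : ℝ) + 1) * w : ℝ) * I) := by
      rw [hq, mul_pow, ← Complex.exp_nat_mul]
      push_cast
      ring_nf
    rw [h3, Complex.re_ofReal_mul, Complex.exp_ofReal_mul_I_re]
  have hre : q.re = r * Real.cos w := by
    simp [hq, Complex.re_ofReal_mul, Complex.exp_ofReal_mul_I_re]
  have him : q.im = r * Real.sin w := by
    simp [hq, Complex.im_ofReal_mul, Complex.exp_ofReal_mul_I_im]
  have hsc : Real.sin w ^ 2 + Real.cos w ^ 2 = 1 := Real.sin_sq_add_cos_sq w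
  have hns : Complex.normSq (1 - q) = 1 - 2 * r * Real.cos w + r ^ 2 := by
    simp only [Complex.normSq_apply, Complex.sub_re, Complex.sub_im, Complex.one_re,
      Complex.one_im, hre, him]
    nlinarith
  have hsumval : (q * (1 - q)⁻¹).re
      = (r * Real.cos w - r ^ 2) / (1 - 2 * r * Real.cos w + r ^ 2) := by
    rw [← div_eq_mul_inv, Complex.div_re, hns, ← add_div]
    congr 1
    simp only [Complex.sub_re, Complex.sub_im, Complex.one_re, Complex.one_im, hre, him]
    linear_combination (-(r ^ 2)) * hsc
  rw [← hsumval]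
  exact (funext hterm) ▸ h2

lemma denom_pos {r c : ℝ} (hr0 : 0 ≤ r) (hr1 : r < 1) (hc : c ≤ 1) :
    0 < 1 - 2 * r * c + r ^ 2 := by nlinarith

lemma F_strictMono {r c₁ c₂ : ℝ} (hr0 : 0 < r) (hr1 : r < 1)
    (hlt : c₂ < c₁) (hc1 : c₁ ≤ 1) :
    (r * c₂ - r ^ 2) / (1 - 2 * r * c₂ + r ^ 2) < (r * c₁ - r ^ 2) / (1 - 2 * r * c₁ + r ^ 2) := by
  have hd1 := denom_pos hr0.le hr1 hc1
  have hd2 := denom_pos hr0.le hr1 (le_trans hlt.le hc1)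
  rw [div_lt_div_iff₀ hd2 hd1]
  nlinarith [mul_pos (mul_pos hr0 (by nlinarith : (0:ℝ) < 1 - r ^ 2)) (sub_pos.2 hlt)]

/-- For every real `z > 1`, the Clausen cosine function
`C_z(x) = ∑_{n≥1} cos(nx)/n^z` is strictly decreasing on `[0, π]`. -/
theorem clausen_cos_strictAntiOn (z : ℝ) (hz : 1 < z) :
    StrictAntiOn (fun x : ℝ => ∑' n : ℕ, Real.cos (((n : ℝ) + 1) * x) / ((n : ℝ) + 1) ^ z)
      (Set.Icc 0 Real.pi) := by
  intro x hx y hy hxy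
  have hΓ : 0 < Real.Gamma z := Real.Gamma_pos_of_pos (by linarith)
  have hcc : Real.cos y < Real.cos x := Real.strictAntiOn_cos hx hy hxy
  set h : ℕ → ℝ → ℝ := fun n t => t ^ (z - 1) * Real.exp (-(((n : ℝ) + 1) * t)) *
    (Real.cos (((n : ℝ) + 1) * x) - Real.cos (((n : ℝ) + 1) * y)) with hh
  have hb : ∀ n : ℕ, (0:ℝ) < (n : ℝ) + 1 := fun n => by positivity
  -- integrability of each h n
  have hInt : ∀ n : ℕ, IntegrableOn (h n) (Ioi 0) := by
    intro n
    have h0 := (integrableOn_rpow_mul_exp_neg_mul_rpow (s := z - 1) (p := 1) (b := (n : ℝ) + 1)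
      (by linarith) zero_lt_one (hb n)).mul_const
      (Real.cos (((n : ℝ) + 1) * x) - Real.cos (((n : ℝ) + 1) * y))
    have heq : (fun t : ℝ => t ^ (z - 1) * Real.exp (-((n : ℝ) + 1) * t ^ (1:ℝ)) *
        (Real.cos (((n : ℝ) + 1) * x) - Real.cos (((n : ℝ) + 1) * y))) = h n := by
      funext t
      rw [hh, Real.rpow_one, neg_mul]
    exact heq ▸ h0
  -- value of each integral
  have hIntval : ∀ n : ℕ, ∫ t in Ioi 0, h n t =
      ((1 / ((n : ℝ) + 1)) ^ z * Real.Gamma z) *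
        (Real.cos (((n : ℝ) + 1) * x) - Real.cos (((n : ℝ) + 1) * y)) := by
    intro n
    rw [hh]
    rw [MeasureTheory.integral_mul_const, integral_rpow_mul_exp_neg_mul_Ioi (by linarith) (hb n)]
  -- value of the norm integrals
  have hnormval : ∀ n : ℕ, ∫ t in Ioi 0, ‖h n t‖ =
      ((1 / ((n : ℝ) + 1)) ^ z * Real.Gamma z) *
        |Real.cos (((n : ℝ) + 1) * x) - Real.cos (((n : ℝ) + 1) * y)| := by
    intro n
    rw [← integral_rpow_mul_exp_neg_mul_Ioi (by linarith : (0:ℝ) < z) (hb n),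
      ← MeasureTheory.integral_mul_const]
    refine setIntegral_congr_fun measurableSet_Ioi (fun t ht => ?_)
    rw [hh]
    simp only [Real.norm_eq_abs, abs_mul]
    rw [_root_.abs_of_nonneg (Real.rpow_nonneg (le_of_lt ht) _),
      _root_.abs_of_pos (Real.exp_pos _)]
  have hsummableInv : Summable (fun n : ℕ => (((n : ℝ) + 1) ^ z)⁻¹) := by
    have h1 : Summable (fun n : ℕ => (((n : ℝ)) ^ z)⁻¹) := summable_nat_rpow_inv.2 hz
    have h2 := (summable_nat_add_iff (f := fun n : ℕ => (((n : ℝ)) ^ z)⁻¹) 1).2 h1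
    refine h2.congr (fun n => ?_)
    push_cast
    ring_nf
  have hsummand : Summable (fun n : ℕ => ((1 / ((n : ℝ) + 1)) ^ z * Real.Gamma z) * 2) := by
    apply Summable.mul_right
    apply Summable.mul_right
    refine hsummableInv.congr (fun n => ?_)
    rw [one_div, Real.inv_rpow (hb n).le]
  have hsummable : Summable (fun n : ℕ => ∫ t in Ioi 0, ‖h n t‖) := by
    refine Summable.of_nonneg_of_le (fun n => integral_nonneg (fun t => norm_nonneg _))
      (fun n => ?_) hsummand
    rw [hnormval n]
    have h2 : |Real.cos (((n : ℝ) + 1) * x) - Real.cos (((n : ℝ) + 1) * y)| ≤ 2 := by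
      have h3 := Real.neg_one_le_cos (((n : ℝ) + 1) * x)
      have h4 := Real.cos_le_one (((n : ℝ) + 1) * x)
      have h5 := Real.neg_one_le_cos (((n : ℝ) + 1) * y)
      have h6 := Real.cos_le_one (((n : ℝ) + 1) * y)
      rw [abs_le]; constructor <;> linarith
    have hpos : 0 ≤ (1 / ((n : ℝ) + 1)) ^ z * Real.Gamma z := by positivity
    exact mul_le_mul_of_nonneg_left h2 hpos
  -- swap sum and integral
  have hswap : ∑' n : ℕ, ∫ t in Ioi 0, h n t = ∫ t in Ioi 0, ∑' n : ℕ, h n t :=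
    integral_tsum_of_summable_integral_norm hInt hsummable
  -- closed form of the inner sum on Ioi 0
  set c₁ := Real.cos x with hc₁
  set c₂ := Real.cos y with hc₂
  set E : ℝ → ℝ := fun t => t ^ (z - 1) *
    ((Real.exp (-t) * c₁ - Real.exp (-t) ^ 2) / (1 - 2 * Real.exp (-t) * c₁ + Real.exp (-t) ^ 2)
      - (Real.exp (-t) * c₂ - Real.exp (-t) ^ 2) /
        (1 - 2 * Real.exp (-t) * c₂ + Real.exp (-t) ^ 2)) with hE
  have hrfacts : ∀ t : ℝ, t ∈ Ioi (0:ℝ) → 0 < Real.exp (-t) ∧ Real.exp (-t) < 1 := by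
    intro t ht
    exact ⟨Real.exp_pos _, Real.exp_lt_one_iff.2 (by simpa using ht)⟩
  have hexp : ∀ (t : ℝ) (n : ℕ), Real.exp (-(((n : ℝ) + 1) * t)) = Real.exp (-t) ^ (n + 1) := by
    intro t n
    rw [show -(((n : ℝ) + 1) * t) = ((n + 1 : ℕ) : ℝ) * (-t) by push_cast; ring,
      Real.exp_nat_mul]
  have hfun : ∀ t : ℝ, (fun n : ℕ => h n t) = fun n : ℕ => t ^ (z - 1) *
        (Real.exp (-t) ^ (n + 1) * Real.cos (((n : ℝ) + 1) * x)
          - Real.exp (-t) ^ (n + 1) * Real.cos (((n : ℝ) + 1) * y)) := by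
    intro t
    funext n
    rw [hh]
    simp only
    rw [hexp t n]
    ring
  have hpt : ∀ t ∈ Ioi (0:ℝ), ∑' n : ℕ, h n t = E t := by
    intro t ht
    obtain ⟨hr0, hr1⟩ := hrfacts t ht
    have hsx := geom_cos_hasSum hr0.le hr1 x
    have hsy := geom_cos_hasSum hr0.le hr1 y
    rw [hfun t, _root_.tsum_mul_left, (hsx.sub hsy).tsum_eq, hE]
  have hEcong : ∫ t in Ioi 0, ∑' n : ℕ, h n t = ∫ t in Ioi 0, E t :=
    setIntegral_congr_fun measurableSet_Ioi hpt
  -- integrability of E on Ioi 0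
  have hIntE : IntegrableOn E (Ioi 0) := by
    constructor
    · apply Measurable.aestronglyMeasurable
      rw [hE]
      fun_prop
    · rw [hasFiniteIntegral_def]
      calc ∫⁻ t in Ioi 0, ‖E t‖₊
          ≤ ∫⁻ t in Ioi 0, (∑' n : ℕ, (‖h n t‖₊ : ℝ≥0∞)) := by
            refine lintegral_mono_ae ?_
            filter_upwards [ae_restrict_mem measurableSet_Ioi] with t ht
            rw [← hpt t ht]
            -- summability of norms at fixed t
            obtain ⟨hr0, hr1⟩ := hrfacts t ht
            have hsnorm : Summable (fun n : ℕ => ‖h n t‖) := by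
              have hg : Summable (fun n : ℕ =>
                  (2 * t ^ (z - 1)) * Real.exp (-t) ^ (n + 1)) := by
                refine Summable.mul_left _ ?_
                simpa [pow_succ'] using
                  (summable_geometric_of_lt_one hr0.le hr1).mul_left (Real.exp (-t))
              refine Summable.of_nonneg_of_le (fun n => norm_nonneg _) (fun n => ?_) hg
              rw [show h n t = t ^ (z - 1) * (Real.exp (-t) ^ (n + 1) *
                  Real.cos (((n : ℝ) + 1) * x) - Real.exp (-t) ^ (n + 1) *
                  Real.cos (((n : ℝ) + 1) * y)) from congrFun (hfun t) n]
              rw [Real.norm_eq_abs, abs_mul]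
              have htp : (0:ℝ) ≤ t ^ (z - 1) := Real.rpow_nonneg (le_of_lt ht) _
              rw [_root_.abs_of_nonneg htp]
              have hbnd : |Real.exp (-t) ^ (n + 1) * Real.cos (((n : ℝ) + 1) * x)
                  - Real.exp (-t) ^ (n + 1) * Real.cos (((n : ℝ) + 1) * y)|
                  ≤ 2 * Real.exp (-t) ^ (n + 1) := by
                have e1 := abs_mul (Real.exp (-t) ^ (n + 1)) (Real.cos (((n : ℝ) + 1) * x))
                have e2 := abs_mul (Real.exp (-t) ^ (n + 1)) (Real.cos (((n : ℝ) + 1) * y))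
                have a1 := Real.abs_cos_le_one (((n : ℝ) + 1) * x)
                have a2 := Real.abs_cos_le_one (((n : ℝ) + 1) * y)
                have hp : (0:ℝ) ≤ Real.exp (-t) ^ (n + 1) := pow_nonneg hr0.le _
                calc |Real.exp (-t) ^ (n + 1) * Real.cos (((n : ℝ) + 1) * x)
                      - Real.exp (-t) ^ (n + 1) * Real.cos (((n : ℝ) + 1) * y)|
                    ≤ |Real.exp (-t) ^ (n + 1) * Real.cos (((n : ℝ) + 1) * x)|
                      + |Real.exp (-t) ^ (n + 1) * Real.cos (((n : ℝ) + 1) * y)| :=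
                      abs_sub _ _
                  _ ≤ 2 * Real.exp (-t) ^ (n + 1) := by
                      rw [e1, e2, _root_.abs_of_nonneg hp]
                      nlinarith
              calc t ^ (z - 1) * |Real.exp (-t) ^ (n + 1) * Real.cos (((n : ℝ) + 1) * x)
                      - Real.exp (-t) ^ (n + 1) * Real.cos (((n : ℝ) + 1) * y)|
                  ≤ t ^ (z - 1) * (2 * Real.exp (-t) ^ (n + 1)) :=
                    mul_le_mul_of_nonneg_left hbnd htp
                _ = 2 * t ^ (z - 1) * Real.exp (-t) ^ (n + 1) := by ring
            have hsnn : Summable (fun n : ℕ => ‖h n t‖₊) := by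
              rw [← NNReal.summable_coe]
              simpa [coe_nnnorm] using hsnorm
            calc (‖∑' n : ℕ, h n t‖₊ : ℝ≥0∞)
                ≤ ((∑' n : ℕ, ‖h n t‖₊ : ℝ≥0) : ℝ≥0∞) := by
                  exact_mod_cast nnnorm_tsum_le hsnn
              _ = ∑' n : ℕ, (‖h n t‖₊ : ℝ≥0∞) := ENNReal.coe_tsum hsnn
        _ = ∑' n : ℕ, ∫⁻ t in Ioi 0, ((‖h n t‖₊ : ℝ≥0∞)) :=
            lintegral_tsum (fun n => (hInt n).aestronglyMeasurable.enorm)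
        _ = ∑' n : ℕ, ENNReal.ofReal (∫ t in Ioi 0, ‖h n t‖) := by
            refine tsum_congr (fun n => ?_)
            simpa [coe_nnnorm] using
              MeasureTheory.lintegral_coe_eq_integral (fun t => ‖h n t‖₊) (hInt n).norm
        _ = ENNReal.ofReal (∑' n : ℕ, ∫ t in Ioi 0, ‖h n t‖) :=
            (ENNReal.ofReal_tsum_of_nonneg
              (fun n => integral_nonneg (fun t => norm_nonneg _)) hsummable).symm
        _ < ⊤ := ENNReal.ofReal_lt_top
  -- positivity of E on Ioi 0
  have hEpos : ∀ t ∈ Ioi (0:ℝ), 0 < E t := by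
    intro t ht
    obtain ⟨hr0, hr1⟩ := hrfacts t ht
    have hmono := F_strictMono hr0 hr1 hcc (Real.cos_le_one x)
    have htp : (0:ℝ) < t ^ (z - 1) := Real.rpow_pos_of_pos ht _
    rw [hE]
    have hd : 0 < (Real.exp (-t) * c₁ - Real.exp (-t) ^ 2) /
        (1 - 2 * Real.exp (-t) * c₁ + Real.exp (-t) ^ 2)
      - (Real.exp (-t) * c₂ - Real.exp (-t) ^ 2) /
        (1 - 2 * Real.exp (-t) * c₂ + Real.exp (-t) ^ 2) := sub_pos.2 hmono
    positivity
  have hipos : 0 < ∫ t in Ioi 0, E t := by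
    rw [setIntegral_pos_iff_support_of_nonneg_ae ?nn hIntE]
    case nn =>
      filter_upwards [ae_restrict_mem measurableSet_Ioi] with t ht
      exact (hEpos t ht).le
    refine lt_of_lt_of_le ?_ (measure_mono (fun t ht => ⟨(hEpos t ht).ne', ht⟩))
    simp [Real.volume_Ioi]
  -- conclude
  have hsum' : ∀ w : ℝ, Summable (fun n : ℕ => Real.cos (((n : ℝ) + 1) * w) / ((n : ℝ) + 1) ^ z) := by
    intro w
    refine Summable.of_norm (Summable.of_nonneg_of_le (fun n => norm_nonneg _)
      (fun n => ?_) hsummableInv)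
    rw [Real.norm_eq_abs, abs_div, _root_.abs_of_pos (Real.rpow_pos_of_pos (hb n) z), ← one_div]
    have := Real.abs_cos_le_one (((n : ℝ) + 1) * w)
    gcongr
  have key : Real.Gamma z * ((∑' n : ℕ, Real.cos (((n : ℝ) + 1) * x) / ((n : ℝ) + 1) ^ z)
      - ∑' n : ℕ, Real.cos (((n : ℝ) + 1) * y) / ((n : ℝ) + 1) ^ z) = ∫ t in Ioi 0, E t := by
    rw [← hEcong, ← hswap, ← Summable.tsum_sub (hsum' x) (hsum' y), ← _root_.tsum_mul_left]
    refine tsum_congr (fun n => ?_)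
    rw [hIntval n, one_div, Real.inv_rpow (hb n).le]
    have hrp : (0:ℝ) < ((n : ℝ) + 1) ^ z := Real.rpow_pos_of_pos (hb n) z
    field_simp
  simp only
  have hfinal : 0 < Real.Gamma z * ((∑' n : ℕ, Real.cos (((n : ℝ) + 1) * x) / ((n : ℝ) + 1) ^ z)
      - ∑' n : ℕ, Real.cos (((n : ℝ) + 1) * y) / ((n : ℝ) + 1) ^ z) := key ▸ hipos
  by_contra hcon
  push_neg at hcon
  have : Real.Gamma z * ((∑' n : ℕ, Real.cos (((n : ℝ) + 1) * x) / ((n : ℝ) + 1) ^ z)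
      - ∑' n : ℕ, Real.cos (((n : ℝ) + 1) * y) / ((n : ℝ) + 1) ^ z) ≤ 0 :=
    mul_nonpos_of_nonneg_of_nonpos hΓ.le (by linarith)
  linarith
end

section
/- The improper integral ∫₀^1 (1/√(1−t) + 1/√(1+t) − 2) · t^{−5/2} dt converges and equals (2/3)·(√2 + 2). -/
open Real MeasureTheory

noncomputable def Fc (t : ℝ) : ℝ :=
  -2/3 * (t ^ (-(3:ℝ)/2) * Real.sqrt (1-t)) - 4/3 * (t ^ (-(1:ℝ)/2) * Real.sqrt (1-t))
  - 2/3 * (t ^ (-(3:ℝ)/2) * Real.sqrt (1+t)) + 4/3 * (t ^ (-(1:ℝ)/2) * Real.sqrt (1+t))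
  + 4/3 * t ^ (-(3:ℝ)/2)

lemma Fc_deriv {t : ℝ} (ht : t ∈ Set.Ioo (0:ℝ) 1) :
    HasDerivAt Fc ((1 / Real.sqrt (1 - t) + 1 / Real.sqrt (1 + t) - 2) * t ^ (-(5 : ℝ) / 2)) t := by
  obtain ⟨ht0, ht1⟩ := ht
  have h1t : (0:ℝ) < 1 - t := by linarith
  have h1t' : (0:ℝ) < 1 + t := by linarith
  have hr : 0 < Real.sqrt (1 - t) := Real.sqrt_pos.2 h1t
  have hs : 0 < Real.sqrt (1 + t) := Real.sqrt_pos.2 h1t'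
  have hp : HasDerivAt (fun x : ℝ => x ^ (-(3:ℝ)/2)) ((-(3:ℝ)/2) * t ^ (-(5:ℝ)/2)) t := by
    have := Real.hasDerivAt_rpow_const (x := t) (p := -(3:ℝ)/2) (Or.inl ht0.ne')
    convert this using 2
    norm_num
  have hq : HasDerivAt (fun x : ℝ => x ^ (-(1:ℝ)/2)) ((-(1:ℝ)/2) * t ^ (-(3:ℝ)/2)) t := by
    have := Real.hasDerivAt_rpow_const (x := t) (p := -(1:ℝ)/2) (Or.inl ht0.ne')
    convert this using 2
    norm_num
  have hrd : HasDerivAt (fun x : ℝ => Real.sqrt (1 - x)) (-(1 / (2 * Real.sqrt (1 - t)))) t := by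
    have h := (Real.hasDerivAt_sqrt h1t.ne').comp t ((hasDerivAt_id t).const_sub 1)
    refine h.congr_deriv ?_
    ring
  have hsd : HasDerivAt (fun x : ℝ => Real.sqrt (1 + x)) (1 / (2 * Real.sqrt (1 + t))) t := by
    have h := (Real.hasDerivAt_sqrt h1t'.ne').comp t ((hasDerivAt_id t).const_add 1)
    refine h.congr_deriv ?_
    ring
  have H : HasDerivAt Fc
      (-2/3 * (((-(3:ℝ)/2) * t ^ (-(5:ℝ)/2)) * Real.sqrt (1-t) + t ^ (-(3:ℝ)/2) * (-(1 / (2 * Real.sqrt (1 - t)))))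
       - 4/3 * (((-(1:ℝ)/2) * t ^ (-(3:ℝ)/2)) * Real.sqrt (1-t) + t ^ (-(1:ℝ)/2) * (-(1 / (2 * Real.sqrt (1 - t)))))
       - 2/3 * (((-(3:ℝ)/2) * t ^ (-(5:ℝ)/2)) * Real.sqrt (1+t) + t ^ (-(3:ℝ)/2) * (1 / (2 * Real.sqrt (1 + t))))
       + 4/3 * (((-(1:ℝ)/2) * t ^ (-(3:ℝ)/2)) * Real.sqrt (1+t) + t ^ (-(1:ℝ)/2) * (1 / (2 * Real.sqrt (1 + t))))
       + 4/3 * ((-(3:ℝ)/2) * t ^ (-(5:ℝ)/2))) t := by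
    exact ((((( hp.mul hrd).const_mul (-2/3)).sub ((hq.mul hrd).const_mul (4/3))).sub
      ((hp.mul hsd).const_mul (2/3))).add ((hq.mul hsd).const_mul (4/3))).add (hp.const_mul (4/3))
  convert H using 1
  -- algebra
  have e0 : ∀ a : ℝ, t ^ (a - 1) = t ^ a / t := fun a => by
    rw [Real.rpow_sub ht0, Real.rpow_one]
  have e2 : t ^ (-(3:ℝ)/2) = t ^ (-(1:ℝ)/2) / t := by
    rw [show (-(3:ℝ)/2) = (-(1:ℝ)/2) - 1 by norm_num, e0]
  have e1 : t ^ (-(5:ℝ)/2) = t ^ (-(1:ℝ)/2) / t / t := by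
    rw [show (-(5:ℝ)/2) = (-(3:ℝ)/2) - 1 by norm_num, e0, e2]
  have i1 : Real.sqrt (1-t) * Real.sqrt (1-t) = 1 - t := Real.mul_self_sqrt h1t.le
  have i2 : Real.sqrt (1+t) * Real.sqrt (1+t) = 1 + t := Real.mul_self_sqrt h1t'.le
  have j1 : 1 / Real.sqrt (1-t) = Real.sqrt (1-t) / (1-t) := by
    rw [← i1]; field_simp; rw [Real.sqrt_sq hr.le]
  have j2 : 1 / Real.sqrt (1+t) = Real.sqrt (1+t) / (1+t) := by
    rw [← i2]; field_simp; rw [Real.sqrt_sq hs.le]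
  have k1 : 1 / (2 * Real.sqrt (1-t)) = Real.sqrt (1-t) / (2*(1-t)) := by
    rw [← i1]; field_simp; rw [Real.sqrt_sq hr.le]
  have k2 : 1 / (2 * Real.sqrt (1+t)) = Real.sqrt (1+t) / (2*(1+t)) := by
    rw [← i2]; field_simp; rw [Real.sqrt_sq hs.le]
  rw [e1, e2, j1, j2, k1, k2]
  field_simp
  ring

noncomputable def Gc (t : ℝ) : ℝ :=
  (4/3 * Real.sqrt t) /
    ((1 + Real.sqrt (1-t) * Real.sqrt (1+t)) * (2 + Real.sqrt (1-t) + Real.sqrt (1+t)))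
  + (8/3 * Real.sqrt t) / (Real.sqrt (1-t) + Real.sqrt (1+t))


lemma Fc_eq_Gc {t : ℝ} (ht : t ∈ Set.Icc (0:ℝ) 1) : Fc t = Gc t := by
  obtain ⟨ht0, ht1⟩ := ht
  rcases eq_or_lt_of_le ht0 with h0 | h0
  · subst h0
    simp [Fc, Gc, Real.zero_rpow, Real.sqrt_zero]
  set r := Real.sqrt (1-t) with hrdef
  set s := Real.sqrt (1+t) with hsdef
  have h1t : (0:ℝ) ≤ 1 - t := by linarith
  have h1t' : (0:ℝ) < 1 + t := by linarith
  have hr0 : 0 ≤ r := Real.sqrt_nonneg _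
  have hs : 0 < s := Real.sqrt_pos.2 h1t'
  have hs1 : 1 ≤ s := by
    have := Real.sqrt_le_sqrt (show (1:ℝ) ≤ 1 + t by linarith)
    rwa [Real.sqrt_one] at this
  have i1 : r * r = 1 - t := Real.mul_self_sqrt h1t
  have i2 : s * s = 1 + t := Real.mul_self_sqrt (by linarith : (0:ℝ) ≤ 1 + t)
  have hst : Real.sqrt t * Real.sqrt t = t := Real.mul_self_sqrt ht0
  have hstpos : 0 < Real.sqrt t := Real.sqrt_pos.2 h0
  have key1 : (2 - r - s) * ((1 + r*s) * (2 + r + s)) = 2 * t^2 := by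
    linear_combination (-(2*(1+t)) - (1 + r*s) - 2*(s*s - (1+t))) * i1
      + (-(2*(1-t)) - (1 + r*s)) * i2
  have key2 : (s - r) * (r + s) = 2 * t := by linear_combination i2 - i1
  have hD1 : (0:ℝ) < (1 + r*s) * (2 + r + s) := by positivity
  have hD2 : (0:ℝ) < r + s := by linarith
  -- rpow to sqrt
  have q1 : t ^ (-(1:ℝ)/2) = Real.sqrt t / t := by
    rw [show (-(1:ℝ)/2) = -(1/2) by ring, Real.rpow_neg ht0, ← Real.sqrt_eq_rpow,
      eq_div_iff h0.ne', inv_mul_eq_div, div_eq_iff (Real.sqrt_pos.2 h0).ne']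
    exact hst.symm
  have p1 : t ^ (-(3:ℝ)/2) = Real.sqrt t / t^2 := by
    rw [show (-(3:ℝ)/2) = (-(1:ℝ)/2) - 1 by norm_num, Real.rpow_sub h0, Real.rpow_one, q1]
    ring
  have hG1 : (4/3 * Real.sqrt t) / ((1 + r*s) * (2 + r + s))
      = (2/3 * Real.sqrt t * (2 - r - s)) / t^2 := by
    rw [div_eq_div_iff hD1.ne' (by positivity)]
    linear_combination (-(2/3) * Real.sqrt t) * key1
  have hG2 : (8/3 * Real.sqrt t) / (r + s) = (4/3 * Real.sqrt t * (s - r)) / t := by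
    rw [div_eq_div_iff hD2.ne' h0.ne']
    linear_combination (-(4/3) * Real.sqrt t) * key2
  show _ = (4/3 * Real.sqrt t) / ((1 + r*s) * (2 + r + s)) + (8/3 * Real.sqrt t) / (r + s)
  rw [hG1, hG2]
  show -2/3 * (t ^ (-(3:ℝ)/2) * r) - 4/3 * (t ^ (-(1:ℝ)/2) * r)
    - 2/3 * (t ^ (-(3:ℝ)/2) * s) + 4/3 * (t ^ (-(1:ℝ)/2) * s) + 4/3 * t ^ (-(3:ℝ)/2) = _
  rw [p1, q1]
  field_simp
  ring

lemma gc_cont : ContinuousOn (fun t : ℝ =>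
    (4/3 * Real.sqrt t) /
      ((1 + Real.sqrt (1-t) * Real.sqrt (1+t)) * (2 + Real.sqrt (1-t) + Real.sqrt (1+t)))
    + (8/3 * Real.sqrt t) / (Real.sqrt (1-t) + Real.sqrt (1+t))) (Set.Icc 0 1) := by
  apply ContinuousOn.add
  · apply ContinuousOn.div
    · fun_prop
    · fun_prop
    · intro x hx
      positivity
  · apply ContinuousOn.div
    · fun_prop
    · fun_prop
    · intro x hx
      have hs1 : 1 ≤ Real.sqrt (1 + x) := by
        have := Real.sqrt_le_sqrt (show (1:ℝ) ≤ 1 + x by linarith [hx.1])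
        rwa [Real.sqrt_one] at this
      have := Real.sqrt_nonneg (1 - x)
      positivity


lemma Fc_cont : ContinuousOn Fc (Set.Icc 0 1) :=
  gc_cont.congr fun x hx => Fc_eq_Gc hx

lemma integrand_nonneg {t : ℝ} (ht : t ∈ Set.Ioo (0:ℝ) 1) :
    0 ≤ (1 / Real.sqrt (1 - t) + 1 / Real.sqrt (1 + t) - 2) * t ^ (-(5 : ℝ) / 2) := by
  obtain ⟨ht0, ht1⟩ := ht
  have h1t : (0:ℝ) < 1 - t := by linarith
  have h1t' : (0:ℝ) < 1 + t := by linarith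
  have hr : 0 < Real.sqrt (1 - t) := Real.sqrt_pos.2 h1t
  have hs : 0 < Real.sqrt (1 + t) := Real.sqrt_pos.2 h1t'
  set r := Real.sqrt (1-t)
  set s := Real.sqrt (1+t)
  have i1 : r * r = 1 - t := Real.mul_self_sqrt h1t.le
  have i2 : s * s = 1 + t := Real.mul_self_sqrt h1t'.le
  apply mul_nonneg _ (Real.rpow_nonneg ht0.le _)
  have hu : r * s ≤ 1 := by nlinarith [mul_pos hr hs]
  have hsum : 2 * (r * s) ≤ r + s := by
    nlinarith [mul_pos hr hs, mul_nonneg (sub_nonneg.2 hu) (by positivity : (0:ℝ) ≤ 1 + 2*(r*s))]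
  have hdiv : 1 / r + 1 / s = (r + s) / (r * s) := by field_simp; ring
  rw [sub_nonneg, hdiv, le_div_iff₀ (mul_pos hr hs)]
  linarith

/-- The improper integral `∫₀¹ (1/√(1−t) + 1/√(1+t) − 2) t^{−5/2} dt`
converges and equals `(2/3)(√2 + 2)`. -/
theorem integral_cB1 :
    IntegrableOn
      (fun t : ℝ => (1 / Real.sqrt (1 - t) + 1 / Real.sqrt (1 + t) - 2) * t ^ (-(5 : ℝ) / 2))
      (Set.Ioo 0 1) ∧
    (∫ t in Set.Ioo (0 : ℝ) 1,
        (1 / Real.sqrt (1 - t) + 1 / Real.sqrt (1 + t) - 2) * t ^ (-(5 : ℝ) / 2))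
      = 2 / 3 * (Real.sqrt 2 + 2) := by
  have hderiv : ∀ t ∈ Set.Ioo (0:ℝ) 1, HasDerivAt Fc
      ((1 / Real.sqrt (1 - t) + 1 / Real.sqrt (1 + t) - 2) * t ^ (-(5 : ℝ) / 2)) t :=
    fun t ht => Fc_deriv ht
  have hpos : ∀ t ∈ Set.Ioo (0:ℝ) 1,
      0 ≤ (1 / Real.sqrt (1 - t) + 1 / Real.sqrt (1 + t) - 2) * t ^ (-(5 : ℝ) / 2) :=
    fun t ht => integrand_nonneg ht
  have hInt : IntegrableOn
      (fun t : ℝ => (1 / Real.sqrt (1 - t) + 1 / Real.sqrt (1 + t) - 2) * t ^ (-(5 : ℝ) / 2))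
      (Set.Ioc 0 1) :=
    intervalIntegral.integrableOn_deriv_of_nonneg Fc_cont hderiv hpos
  refine ⟨hInt.mono_set Set.Ioo_subset_Ioc_self, ?_⟩
  have hii : IntervalIntegrable
      (fun t : ℝ => (1 / Real.sqrt (1 - t) + 1 / Real.sqrt (1 + t) - 2) * t ^ (-(5 : ℝ) / 2))
      volume 0 1 :=
    (intervalIntegrable_iff_integrableOn_Ioc_of_le (by norm_num)).2 hInt
  have hFTC := intervalIntegral.integral_eq_sub_of_hasDerivAt_of_le (by norm_num)
    Fc_cont hderiv hii
  rw [← MeasureTheory.integral_Ioc_eq_integral_Ioo,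
    ← intervalIntegral.integral_of_le (by norm_num : (0:ℝ) ≤ 1), hFTC]
  have h0 : Fc 0 = 0 := by
    simp [Fc, Real.zero_rpow (by norm_num : (-(3:ℝ)/2) ≠ 0),
      Real.zero_rpow (by norm_num : (-(1:ℝ)/2) ≠ 0)]
  have h1 : Fc 1 = 2 / 3 * (Real.sqrt 2 + 2) := by
    simp only [Fc]
    norm_num [Real.one_rpow, Real.sqrt_zero]
    ring
  rw [h0, h1]
  ring
end
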